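/- Let Θ be a measurable subset of ℝ, let p(x|θ) ≥ 0 be jointly measurable densities in x for each θ, and let π : Θ → (0,∞) be continuous with 0 < ∫_Θ p(x|θ)π(θ)dθ < ∞ for every x. Let {Θ_i} be an increasing sequence of compact subsets of Θ with ∪_i Θ_i = Θ and ∫_{Θ_1} p(x|θ)π(θ)dθ > 0. Define the formal posterior π(θ|x) = p(x|θ)π(θ)/∫_Θ p(x|θ')π(θ')dθ' and the restricted posteriors π_i(θ|x) = p(x|θ)π(θ)1_{Θ_i}(θ)/∫_{Θ_i} p(x|θ')π(θ')dθ'. Then for every x, the logarithmic divergence ∫_{Θ_i} π_i(θ|x) log(π_i(θ|x)/π(θ|x)) dθ converges to 0 as i → ∞. -/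

import Mathlib

open MeasureTheory Filter

/-- For a formal posterior from a (possibly improper) strictly
positive continuous prior, the posteriors restricted to an approximating
compact sequence converge logarithmically to the formal posterior. -/
theorem stmt_0
    {X : Type*} [MeasurableSpace X]
    (Θ : Set ℝ) (hΘ : MeasurableSet Θ)
    (p : X → ℝ → ℝ)
    (hp_meas : Measurable (Function.uncurry p))
    (hp_nonneg : ∀ x θ, 0 ≤ p x θ)
    (pri : ℝ → ℝ) (hpri_cont : ContinuousOn pri Θ) (hpri_pos : ∀ θ ∈ Θ, 0 < pri θ)
    (hpos : ∀ x, 0 < ∫ θ in Θ, p x θ * pri θ)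
    (hfin : ∀ x, IntegrableOn (fun θ => p x θ * pri θ) Θ)
    (Θi : ℕ → Set ℝ)
    (hmono : Monotone Θi)
    (hcpt : ∀ i, IsCompact (Θi i))
    (hsub : ∀ i, Θi i ⊆ Θ)
    (hcover : (⋃ i, Θi i) = Θ)
    (hpos0 : ∀ x, 0 < ∫ θ in Θi 0, p x θ * pri θ) :
    ∀ x, Tendsto
      (fun i =>
        ∫ θ in Θi i,
          (p x θ * pri θ / (∫ θ' in Θi i, p x θ' * pri θ')) *
            Real.log
              ((p x θ * pri θ / (∫ θ' in Θi i, p x θ' * pri θ')) /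
                (p x θ * pri θ / (∫ θ' in Θ, p x θ' * pri θ'))))
      atTop (nhds 0) := by
  intro x
  set f : ℝ → ℝ := fun θ => p x θ * pri θ with hf
  set Z : ℝ := ∫ θ in Θ, f θ with hZ
  set Zi : ℕ → ℝ := fun i => ∫ θ in Θi i, f θ with hZi
  have hZpos : 0 < Z := hpos x
  have hZipos : ∀ i, 0 < Zi i := by
    intro i
    refine lt_of_lt_of_le (hpos0 x) ?_
    apply setIntegral_mono_set ((hfin x).mono_set (hsub i))
    · filter_upwards [ae_restrict_mem (hcpt i).measurableSet] with θ hθ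
      exact mul_nonneg (hp_nonneg x θ) (hpri_pos θ (hsub i hθ)).le
    · exact Filter.Eventually.of_forall (fun θ hθ => hmono (Nat.zero_le i) hθ)
  have key : ∀ i, (∫ θ in Θi i,
      (f θ / Zi i) * Real.log ((f θ / Zi i) / (f θ / Z)))
      = Real.log (Z / Zi i) := by
    intro i
    have h1 : ∀ θ, (f θ / Zi i) * Real.log ((f θ / Zi i) / (f θ / Z))
        = (f θ / Zi i) * Real.log (Z / Zi i) := by
      intro θ
      by_cases hθ : f θ = 0
      · simp [hθ]
      · rw [div_div_div_comm, div_self hθ, one_div_div]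
    simp_rw [h1, div_mul_eq_mul_div]
    rw [integral_div, integral_mul_const]
    show Zi i * Real.log (Z / Zi i) / Zi i = _
    rw [mul_comm, mul_div_assoc, div_self (hZipos i).ne', mul_one]
  have hlog : Tendsto (fun i => Real.log (Z / Zi i)) atTop (nhds 0) := by
    have hZitend : Tendsto Zi atTop (nhds Z) := by
      have := MeasureTheory.tendsto_setIntegral_of_monotone
        (fun i => (hcpt i).measurableSet) hmono (hcover ▸ hfin x)
      rwa [hcover] at this
    have hdiv : Tendsto (fun i => Z / Zi i) atTop (nhds (Z / Z)) :=
      Tendsto.div tendsto_const_nhds hZitend hZpos.ne'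
    rw [div_self hZpos.ne'] at hdiv
    have := (Real.continuousAt_log one_ne_zero).tendsto.comp hdiv
    simpa [Function.comp_def] using this
  exact hlog.congr (fun i => (key i).symm)
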